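/- For every uncountable cardinal κ with κ^{<κ} = κ, there is a map # defined on all sequences of ordinals < κ of successor length < κ, with values in κ, such that: (a) for all s, t of the same successor length < κ, #(s) ≤ #(s ⊕ t); and (b) for every γ < κ, the restriction of # to ^{γ+1}κ (sequences of length γ+1 with values < κ) is a bijection onto κ. -/

import Mathlib

/-- `Hes` is the Hessenberg pairing of ordinals: the unique surjective binary function
on ordinals such that `Hes α β ≤ Hes α' β'` iff `max α β < max α' β'`, or the maxima
are equal and `(α, β)` is lexicographically at most `(α', β')`. -/
def HesProp (Hes : Ordinal → Ordinal → Ordinal) : Prop :=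
  (∀ δ : Ordinal, ∃ α β : Ordinal, Hes α β = δ) ∧
    ∀ α β α' β' : Ordinal,
      Hes α β ≤ Hes α' β' ↔
        (max α β < max α' β' ∨
          (max α β = max α' β' ∧ (α < α' ∨ (α = α' ∧ β ≤ β'))))

/-- The pointwise formula for the map `⊕` on pairs of ordinal sequences of the same
length (sequences are coded as total functions on the ordinals; only values at
positions below the length matter).  With `ρ(γ,γ') = Hes(γ,γ') + 1`, the recursive
definition of `⊕` gives `(s ⊕ t)(0) = ρ(s 0, t 0)` and, for positions `α > 0`,
`(s ⊕ t)(α) = ρ((sup_{β ≤ α} s β) + ω, ρ(s α, t α))`. -/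
noncomputable def oplusPt (Hes : Ordinal → Ordinal → Ordinal) (s t : Ordinal → Ordinal)
    (α : Ordinal) : Ordinal :=
  if α = 0 then Hes (s 0) (t 0) + 1
  else Hes (sSup (s '' Set.Iic α) + Ordinal.omega0) (Hes (s α) (t α) + 1) + 1

namespace SharpAux

open Ordinal Cardinal Set

variable {Hes : Ordinal → Ordinal → Ordinal}

theorem hes_mono (hp : HesProp Hes) {a a' b b' : Ordinal} (h1 : a ≤ a') (h2 : b ≤ b') :
    Hes a b ≤ Hes a' b' := by
  rw [hp.2]
  rcases lt_or_eq_of_le (max_le_max h1 h2) with h | h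
  · exact Or.inl h
  · refine Or.inr ⟨h, ?_⟩
    rcases lt_or_eq_of_le h1 with h' | h'
    · exact Or.inl h'
    · exact Or.inr ⟨h', h2⟩

theorem hes_inj (hp : HesProp Hes) {a b a' b' : Ordinal} (h : Hes a b = Hes a' b') :
    a = a' ∧ b = b' := by
  have l1 := (hp.2 a b a' b').1 h.le
  have l2 := (hp.2 a' b' a b).1 h.ge
  rcases l1 with h1 | ⟨hm1, hl1⟩
  · rcases l2 with h2 | ⟨hm2, _⟩
    · exact absurd h2 (asymm h1)
    · exact absurd hm2 (ne_of_gt h1)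
  · rcases l2 with h2 | ⟨_, hl2⟩
    · exact absurd hm1 (ne_of_gt h2)
    · rcases hl1 with h1 | ⟨rfl, hb1⟩
      · rcases hl2 with h2 | ⟨h2, _⟩
        · exact absurd h2 (asymm h1)
        · exact absurd h2.symm (ne_of_lt h1)
      · rcases hl2 with h2 | ⟨_, hb2⟩
        · exact absurd h2 (lt_irrefl a)
        · exact ⟨rfl, le_antisymm hb1 hb2⟩

theorem hes_strict (hp : HesProp Hes) {a a' b b' : Ordinal} (h1 : a ≤ a') (h2 : b < b') :
    Hes a b < Hes a' b' :=
  lt_of_le_of_ne (hes_mono hp h1 h2.le) (fun h => absurd (hes_inj hp h).2 (ne_of_lt h2))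

theorem hes_le_zero (hp : HesProp Hes) (d : Ordinal) : d ≤ Hes 0 d := by
  induction d using Ordinal.induction with
  | h d IH =>
    by_contra hc
    push_neg at hc
    exact absurd (IH _ hc) (not_le.2 (hes_strict hp le_rfl hc))

theorem hes_ge (hp : HesProp Hes) (a b : Ordinal) : max a b ≤ Hes a b := by
  refine (hes_le_zero hp (max a b)).trans ?_
  rw [hp.2]
  refine Or.inr ⟨by simp, ?_⟩
  rcases eq_or_lt_of_le (zero_le : (0 : Ordinal) ≤ a) with h | h
  · exact Or.inr ⟨h, by simp [← h]⟩
  · exact Or.inl h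

theorem hes_lt_ord (hp : HesProp Hes) {κ : Cardinal} (hκ : ℵ₀ ≤ κ) {a b : Ordinal}
    (ha : a < κ.ord) (hb : b < κ.ord) : Hes a b < κ.ord := by
  rw [Cardinal.lt_ord]
  have hm : max a b < κ.ord := max_lt ha hb
  have hm1 : (max a b + 1).card < κ := by
    rw [add_one_eq_succ]
    exact Cardinal.lt_ord.1 ((Cardinal.isSuccLimit_ord hκ).succ_lt hm)
  have hun : ∀ ξ : Ordinal, ∃ xy : Ordinal × Ordinal, Hes xy.1 xy.2 = ξ := by
    intro ξ
    obtain ⟨x, y, hxy⟩ := hp.1 ξ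
    exact ⟨(x, y), hxy⟩
  have hbound : ∀ ξ : ↥(Set.Iio (Hes a b)),
      max (hun ξ.1).choose.1 (hun ξ.1).choose.2 ≤ max a b := by
    rintro ⟨ξ, hξ⟩
    have hlt : ¬ (Hes a b ≤ Hes (hun ξ).choose.1 (hun ξ).choose.2) := by
      rw [(hun ξ).choose_spec]
      exact not_le.2 hξ
    rw [hp.2] at hlt
    push_neg at hlt
    exact hlt.1
  let f : ↥(Set.Iio (Hes a b)) → ↥(Set.Iio (max a b + 1)) × ↥(Set.Iio (max a b + 1)) :=
    fun ξ => ⟨⟨(hun ξ.1).choose.1,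
        lt_of_le_of_lt (le_trans (le_max_left _ _) (hbound ξ)) (by rw [add_one_eq_succ]; exact Order.lt_succ _)⟩,
      ⟨(hun ξ.1).choose.2,
        lt_of_le_of_lt (le_trans (le_max_right _ _) (hbound ξ)) (by rw [add_one_eq_succ]; exact Order.lt_succ _)⟩⟩
  have hfinj : Function.Injective f := by
    rintro ⟨ξ, hξ⟩ ⟨ξ', hξ'⟩ hf
    have h1 : (hun ξ).choose.1 = (hun ξ').choose.1 := congrArg (fun z => (z.1 : Ordinal)) hf
    have h2 : (hun ξ).choose.2 = (hun ξ').choose.2 := congrArg (fun z => (z.2 : Ordinal)) hf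
    have := (hun ξ).choose_spec
    rw [h1, h2, (hun ξ').choose_spec] at this
    exact Subtype.ext this.symm
  have hle := Cardinal.mk_le_of_injective hfinj
  simp only [Cardinal.mk_prod, Cardinal.lift_id, Ordinal.mk_Iio_ordinal, ← Cardinal.lift_mul,
    Cardinal.lift_le] at hle
  exact lt_of_le_of_lt hle (Cardinal.mul_lt_of_lt hκ hm1 hm1)

end SharpAux

namespace SharpAux

open Ordinal Cardinal Set

variable {Hes : Ordinal → Ordinal → Ordinal}

/-- Sequences of length `γ+1` with values `< θ`, padded by `0`. -/
def XT (θ γ : Ordinal) : Type _ :=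
  {f : Ordinal → Ordinal // ∀ α, (α < γ + 1 → f α < θ) ∧ (¬ α < γ + 1 → f α = 0)}

noncomputable def truncF (θ γ : Ordinal) (s : Ordinal → Ordinal) : Ordinal → Ordinal :=
  fun α => if α < γ + 1 ∧ s α < θ then s α else 0

theorem zero_lt_succ (γ : Ordinal) : (0 : Ordinal) < γ + 1 :=
  lt_of_lt_of_le zero_lt_one le_add_self

noncomputable def trunc {θ : Ordinal} (hθ : 0 < θ) (γ : Ordinal) (s : Ordinal → Ordinal) : XT θ γ :=
  ⟨truncF θ γ s, fun α => by
    unfold truncF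
    constructor
    · intro h
      by_cases h2 : α < γ + 1 ∧ s α < θ
      · rw [if_pos h2]; exact h2.2
      · rw [if_neg h2]; exact hθ
    · intro h
      rw [if_neg (fun h2 => h h2.1)]⟩

theorem trunc_eq_self {θ : Ordinal} (hθ : 0 < θ) (γ : Ordinal) (v : XT θ γ) :
    trunc hθ γ v.1 = v := by
  apply Subtype.ext
  funext α
  show truncF θ γ v.1 α = v.1 α
  unfold truncF
  by_cases h : α < γ + 1
  · rw [if_pos ⟨h, (v.2 α).1 h⟩]
  · rw [if_neg (fun h2 => h h2.1), (v.2 α).2 h]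

theorem trunc_apply_of_lt {θ : Ordinal} (hθ : 0 < θ) {γ α : Ordinal} {s : Ordinal → Ordinal}
    (h : α < γ + 1) (hs : s α < θ) : (trunc hθ γ s).1 α = s α := if_pos ⟨h, hs⟩

open scoped Classical in
noncomputable def dec0 (Hes : Ordinal → Ordinal → Ordinal) (z : Ordinal) : Ordinal :=
  if h : ∃ xy : Ordinal × Ordinal, Hes xy.1 xy.2 + 1 = z then h.choose.1 else 0

open scoped Classical in
noncomputable def dec1 (Hes : Ordinal → Ordinal → Ordinal) (z : Ordinal) : Ordinal :=
  if h : ∃ w : Ordinal × Ordinal × Ordinal, Hes w.1 (Hes w.2.1 w.2.2 + 1) + 1 = z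
  then h.choose.2.1 else 0

theorem dec0_eq (hp : HesProp Hes) (x y : Ordinal) : dec0 Hes (Hes x y + 1) = x := by
  unfold dec0
  have h : ∃ xy : Ordinal × Ordinal, Hes xy.1 xy.2 + 1 = Hes x y + 1 := ⟨(x, y), rfl⟩
  rw [dif_pos h]
  have hs := h.choose_spec
  simp only [add_one_eq_succ] at hs
  exact (hes_inj hp (Order.succ_injective hs)).1

theorem dec1_eq (hp : HesProp Hes) (a x y : Ordinal) :
    dec1 Hes (Hes a (Hes x y + 1) + 1) = x := by
  unfold dec1
  have h : ∃ w : Ordinal × Ordinal × Ordinal,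
      Hes w.1 (Hes w.2.1 w.2.2 + 1) + 1 = Hes a (Hes x y + 1) + 1 := ⟨(a, x, y), rfl⟩
  rw [dif_pos h]
  have hs := h.choose_spec
  simp only [add_one_eq_succ] at hs
  have h2 := (hes_inj hp (Order.succ_injective hs)).2
  exact (hes_inj hp (Order.succ_injective h2)).1

theorem dec0_lt (hp : HesProp Hes) {θ z : Ordinal} (hθ : 0 < θ) (hz : z < θ) :
    dec0 Hes z < θ := by
  unfold dec0
  split
  · next h =>
    refine lt_of_lt_of_le ?_ hz.le
    calc h.choose.1 ≤ Hes h.choose.1 h.choose.2 := le_trans (le_max_left _ _) (hes_ge hp _ _)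
    _ < Hes h.choose.1 h.choose.2 + 1 := by rw [add_one_eq_succ]; exact Order.lt_succ _
    _ = z := h.choose_spec
  · exact hθ

theorem dec1_lt (hp : HesProp Hes) {θ z : Ordinal} (hθ : 0 < θ) (hz : z < θ) :
    dec1 Hes z < θ := by
  unfold dec1
  split
  · next h =>
    refine lt_of_lt_of_le ?_ hz.le
    calc h.choose.2.1 ≤ Hes h.choose.2.1 h.choose.2.2 :=
        le_trans (le_max_left _ _) (hes_ge hp _ _)
    _ < Hes h.choose.2.1 h.choose.2.2 + 1 := by rw [add_one_eq_succ]; exact Order.lt_succ _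
    _ ≤ Hes h.choose.1 (Hes h.choose.2.1 h.choose.2.2 + 1) :=
        le_trans (le_max_right _ _) (hes_ge hp _ _)
    _ < Hes h.choose.1 (Hes h.choose.2.1 h.choose.2.2 + 1) + 1 := by
        rw [add_one_eq_succ]; exact Order.lt_succ _
    _ = z := h.choose_spec
  · exact hθ

/-- The decoding map: recovers `trunc s` from `trunc (s ⊕ t)`. -/
noncomputable def pmap (hp : HesProp Hes) {θ : Ordinal} (hθ : 0 < θ) (γ : Ordinal) (v : XT θ γ) : XT θ γ :=
  ⟨fun α => if α = 0 then dec0 Hes (v.1 0) else if α < γ + 1 then dec1 Hes (v.1 α) else 0,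
    fun α => by
      constructor
      · intro h
        by_cases h0 : α = 0
        · simp only [if_pos h0]
          exact dec0_lt hp hθ ((v.2 0).1 (zero_lt_succ γ))
        · simp only [if_neg h0, if_pos h]
          exact dec1_lt hp hθ ((v.2 α).1 h)
      · intro h
        have h0 : α ≠ 0 := by
          rintro rfl
          exact h (zero_lt_succ γ)
        simp only [if_neg h0, if_neg h]⟩

end SharpAux

namespace SharpAux

open Ordinal Cardinal Set

universe u

variable {Hes : Ordinal → Ordinal → Ordinal}

theorem ord_pos' {κ : Cardinal} (hκ : ℵ₀ ≤ κ) : (0 : Ordinal) < κ.ord :=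
  Cardinal.lt_ord.2 (by simpa using aleph0_pos.trans_le hκ)

theorem pmap_trunc (hp : HesProp Hes) {θ : Ordinal} (hθ : 0 < θ) (γ : Ordinal)
    (s t : Ordinal → Ordinal) (hs : ∀ α < γ + 1, s α < θ)
    (hb : ∀ α < γ + 1, oplusPt Hes s t α < θ) :
    pmap hp hθ γ (trunc hθ γ (oplusPt Hes s t)) = trunc hθ γ s := by
  apply Subtype.ext
  funext α
  show (if α = 0 then dec0 Hes ((trunc hθ γ (oplusPt Hes s t)).1 0)
      else if α < γ + 1 then dec1 Hes ((trunc hθ γ (oplusPt Hes s t)).1 α) else 0)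
      = truncF θ γ s α
  by_cases h0 : α = 0
  · subst h0
    rw [if_pos rfl, trunc_apply_of_lt hθ (zero_lt_succ γ) (hb 0 (zero_lt_succ γ))]
    show dec0 Hes (oplusPt Hes s t 0) = _
    rw [oplusPt, if_pos rfl, dec0_eq hp]
    unfold truncF
    rw [if_pos ⟨zero_lt_succ γ, hs 0 (zero_lt_succ γ)⟩]
  · by_cases h1 : α < γ + 1
    · rw [if_neg h0, if_pos h1, trunc_apply_of_lt hθ h1 (hb α h1)]
      show dec1 Hes (oplusPt Hes s t α) = _
      rw [oplusPt, if_neg h0, dec1_eq hp]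
      unfold truncF
      rw [if_pos ⟨h1, hs α h1⟩]
    · rw [if_neg h0, if_neg h1]
      unfold truncF
      rw [if_neg (fun h2 => h1 h2.1)]

noncomputable def xtEquiv {θ : Ordinal} (hθ : 0 < θ) (γ : Ordinal) :
    XT θ γ ≃ (↥(Set.Iio (γ + 1)) → ↥(Set.Iio θ)) where
  toFun f := fun β => ⟨f.1 β.1, (f.2 β.1).1 β.2⟩
  invFun g := ⟨fun α => if h : α < γ + 1 then (g ⟨α, h⟩).1 else 0,
    fun α => ⟨fun h => by dsimp only; rw [dif_pos h]; exact (g ⟨α, h⟩).2,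
      fun h => by dsimp only; rw [dif_neg h]⟩⟩
  left_inv f := Subtype.ext (funext fun α => by
    show (if h : α < γ + 1 then _ else 0) = f.1 α
    by_cases h : α < γ + 1
    · exact dif_pos h
    · rw [dif_neg h, (f.2 α).2 h])
  right_inv g := funext fun β => Subtype.ext (by
    show (if h : (β : Ordinal) < γ + 1 then ((g ⟨β, h⟩ : ↥(Set.Iio _)) : Ordinal) else 0) = _
    rw [dif_pos (show (β : Ordinal) < γ + 1 from β.2)])

theorem mk_XT {κ : Cardinal.{u}} (hκ : ℵ₀ ≤ κ) (hks : κ ^< κ = κ) {γ : Ordinal.{u}}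
    (hγ : γ < κ.ord) : #(XT κ.ord γ) = Cardinal.lift.{u + 1} κ := by
  have h1 : γ + 1 < κ.ord := by
    rw [add_one_eq_succ]; exact (Cardinal.isSuccLimit_ord hκ).succ_lt hγ
  have hc : (γ + 1).card < κ := Cardinal.lt_ord.1 h1
  have hκ0 : κ ≠ 0 := (aleph0_pos.trans_le hκ).ne'
  calc #(XT κ.ord γ) = #(↥(Set.Iio (γ + 1)) → ↥(Set.Iio κ.ord)) :=
        Cardinal.mk_congr (xtEquiv (ord_pos' hκ) γ)
  _ = #(↥(Set.Iio κ.ord)) ^ #(↥(Set.Iio (γ + 1))) := (Cardinal.power_def _ _).symm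
  _ = Cardinal.lift.{u + 1} κ := by
      rw [Ordinal.mk_Iio_ordinal, Ordinal.mk_Iio_ordinal, Cardinal.card_ord,
        ← Cardinal.lift_power]
      congr 1
      apply le_antisymm
      · exact (Cardinal.le_powerlt κ hc).trans hks.le
      · conv_lhs => rw [← Cardinal.power_one κ]
        refine Cardinal.power_le_power_left hκ0 ?_
        rw [Cardinal.one_le_iff_ne_zero, ne_eq, Ordinal.card_eq_zero]
        exact (zero_lt_succ γ).ne'

end SharpAux

namespace SharpAux

open Ordinal Cardinal Set

universe u

variable {Hes : Ordinal → Ordinal → Ordinal}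

theorem exists_F (hp : HesProp Hes) {κ : Cardinal.{u}} (hunc : ℵ₀ < κ) (hks : κ ^< κ = κ)
    (hreg : κ.IsRegular) (hθ : (0 : Ordinal) < κ.ord) {γ : Ordinal.{u}} (hγ : γ < κ.ord) :
    ∃ F : XT κ.ord γ → Ordinal.{u},
      (∀ u v : XT κ.ord γ, pmap hp hθ γ v = u → u.1 0 < v.1 0 → F u < F v) ∧
      (∀ v, F v < κ.ord) ∧ Function.Injective F ∧ (∀ δ < κ.ord, ∃ v, F v = δ) := by
  have hκ : ℵ₀ ≤ κ := hunc.le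
  set θ := κ.ord with hθdef
  have hlim : Order.IsSuccLimit θ := Cardinal.isSuccLimit_ord hκ
  obtain ⟨e⟩ : Nonempty (↥(Set.Iio θ) ≃ XT θ γ) :=
    Cardinal.eq.1 (by rw [Ordinal.mk_Iio_ordinal, Cardinal.card_ord, mk_XT hκ hks hγ])
  set p := pmap hp hθ γ with hpdef
  set r : XT θ γ → Ordinal := fun v => ⨆ k : ℕ, ((e.symm (p^[k] v)) : Ordinal) with hrdef
  have hbdd : ∀ v : XT θ γ, BddAbove (Set.range fun k : ℕ => ((e.symm (p^[k] v)) : Ordinal)) :=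
    fun v => ⟨θ, by rintro x ⟨k, rfl⟩; exact le_of_lt (e.symm (p^[k] v)).2⟩
  have hrlt : ∀ v, r v < θ := fun v =>
    Cardinal.iSup_lt_ord_lift_of_isRegular hreg (by simpa using hunc)
      (fun k => (e.symm (p^[k] v)).2)
  have hrle : ∀ v, r (p v) ≤ r v := by
    intro v
    refine ciSup_le fun k => ?_
    have h1 : p^[k] (p v) = p^[k + 1] v := (Function.iterate_succ_apply p k v).symm
    rw [h1]
    exact le_ciSup (hbdd v) (k + 1)
  have hrge : ∀ v, ((e.symm v) : Ordinal) ≤ r v := fun v => le_ciSup (hbdd v) 0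
  set r' : XT θ γ → Ordinal := fun v => Hes (r v) (v.1 0) with hr'def
  have hr'lt : ∀ v, r' v < θ :=
    fun v => hes_lt_ord hp hκ (hrlt v) ((v.2 0).1 (zero_lt_succ γ))
  have hr'ge : ∀ v, ((e.symm v) : Ordinal) ≤ r' v := fun v =>
    le_trans (hrge v) (le_trans (le_max_left _ _) (hes_ge hp _ _))
  set key : XT θ γ → Ordinal := fun v => θ * r' v + ((e.symm v) : Ordinal) with hkeydef
  have hkeylt : ∀ a x b y : Ordinal, x < θ → a < b → θ * a + x < θ * b + y := by
    intro a x b y hx hab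
    calc θ * a + x < θ * a + θ := add_lt_add_right hx _
    _ = θ * (a + 1) := by rw [add_one_eq_succ, mul_succ]
    _ ≤ θ * b := mul_le_mul_right (by rwa [add_one_eq_succ, Order.succ_le_iff]) θ
    _ ≤ θ * b + y := le_self_add
  have hkeymono : ∀ u v, r' u < r' v → key u < key v := fun u v h =>
    hkeylt _ _ _ _ (e.symm u).2 h
  have hkeyinj : Function.Injective key := by
    intro u v h
    have hr'eq : r' u = r' v := by
      rcases lt_trichotomy (r' u) (r' v) with hlt | heq | hgt
      · exact absurd h (ne_of_lt (hkeymono u v hlt))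
      · exact heq
      · exact absurd h.symm (ne_of_lt (hkeymono v u hgt))
    rw [hkeydef] at h
    simp only [hr'eq] at h
    have h2 := add_left_cancel h
    exact e.symm.injective (Subtype.ext h2)
  have hkeyub : ∀ v, key v < θ * θ := by
    intro v
    calc key v < θ * r' v + θ := add_lt_add_right (e.symm v).2 _
    _ = θ * (r' v + 1) := by rw [add_one_eq_succ, mul_succ]
    _ ≤ θ * θ := mul_le_mul_right
        (le_of_lt (by rw [add_one_eq_succ]; exact hlim.succ_lt (hr'lt v))) θ
  set S : Set Ordinal := Set.range key ∪ Set.Ici (θ * θ) with hSdef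
  have hS : ¬ BddAbove S := by
    rintro ⟨b, hb⟩
    have h1 : max (b + 1) (θ * θ) ∈ S :=
      Set.mem_union_right _ (Set.mem_Ici.2 (le_max_right _ _))
    have h2 : b + 1 ≤ b := le_trans (le_max_left _ _) (hb h1)
    exact absurd h2 (not_le.2 (by rw [add_one_eq_succ]; exact Order.lt_succ b))
  have hmem : ∀ v, ∃ o, Ordinal.enumOrd S o = key v := by
    intro v
    have h1 : key v ∈ Set.range (Ordinal.enumOrd S) := by
      rw [Ordinal.range_enumOrd hS]
      exact Set.mem_union_left _ ⟨v, rfl⟩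
    exact h1
  set F : XT θ γ → Ordinal := fun v => (hmem v).choose with hFdef
  have hF : ∀ v, Ordinal.enumOrd S (F v) = key v := fun v => (hmem v).choose_spec
  have hFinj : Function.Injective F := by
    intro u v h
    apply hkeyinj
    rw [← hF u, ← hF v, h]
  refine ⟨F, ?_, ?_, hFinj, ?_⟩
  · -- monotonicity
    intro u v hpv hu0
    have hru : r u ≤ r v := by rw [← hpv]; exact hrle v
    have h1 : key u < key v := hkeymono u v (hes_strict hp hru hu0)
    have h2 : Ordinal.enumOrd S (F u) < Ordinal.enumOrd S (F v) := by
      rw [hF u, hF v]; exact h1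
    exact (Ordinal.enumOrd_strictMono hS).lt_iff_lt.1 h2
  · -- boundedness
    intro v
    rw [Cardinal.lt_ord]
    have hr1 : r' v + 1 < θ := by rw [add_one_eq_succ]; exact hlim.succ_lt (hr'lt v)
    have hwex : ∀ o : ↥(Set.Iio (F v)), ∃ w : XT θ γ, key w = Ordinal.enumOrd S o.1 := by
      rintro ⟨o, ho⟩
      have hlt : Ordinal.enumOrd S o < key v := by
        rw [← hF v]; exact Ordinal.enumOrd_strictMono hS ho
      rcases Ordinal.enumOrd_mem hS o with hgo | hgo
      · exact hgo
      · exact absurd (hlt.trans (hkeyub v)) (not_lt.2 hgo)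
    have hwlt : ∀ o : ↥(Set.Iio (F v)), ((e.symm (hwex o).choose) : Ordinal) < r' v + 1 := by
      intro o
      have hol : Ordinal.enumOrd S o.1 < key v := by
        rw [← hF v]; exact Ordinal.enumOrd_strictMono hS o.2
      have h2 : r' (hwex o).choose ≤ r' v := by
        by_contra hc
        push_neg at hc
        have h3 := hkeymono v _ hc
        rw [(hwex o).choose_spec] at h3
        exact absurd h3 (not_lt.2 hol.le)
      calc ((e.symm (hwex o).choose) : Ordinal) ≤ r' (hwex o).choose := hr'ge _
      _ ≤ r' v := h2
      _ < r' v + 1 := by rw [add_one_eq_succ]; exact Order.lt_succ _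
    let f : ↥(Set.Iio (F v)) → ↥(Set.Iio (r' v + 1)) :=
      fun o => ⟨((e.symm (hwex o).choose) : Ordinal), hwlt o⟩
    have hfinj : Function.Injective f := by
      intro o1 o2 hf
      have h1 : e.symm (hwex o1).choose = e.symm (hwex o2).choose :=
        Subtype.ext (congrArg (fun z : ↥(Set.Iio (r' v + 1)) => (z : Ordinal)) hf)
      have h2 : (hwex o1).choose = (hwex o2).choose := e.symm.injective h1
      have h3 := (hwex o1).choose_spec
      rw [h2, (hwex o2).choose_spec] at h3
      exact Subtype.ext (Ordinal.enumOrd_injective hS h3).symm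
    have h4 := Cardinal.mk_le_of_injective hfinj
    rw [Ordinal.mk_Iio_ordinal, Ordinal.mk_Iio_ordinal, Cardinal.lift_le] at h4
    exact lt_of_le_of_lt h4 (Cardinal.lt_ord.1 hr1)
  · -- surjectivity
    intro δ hδ
    by_cases hc : Ordinal.enumOrd S δ ∈ Set.range key
    · obtain ⟨v, hv⟩ := hc
      exact ⟨v, Ordinal.enumOrd_injective hS (by rw [hF v, hv])⟩
    · exfalso
      have hup : θ * θ ≤ Ordinal.enumOrd S δ := by
        rcases Ordinal.enumOrd_mem hS δ with h | h
        · exact absurd h hc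
        · exact h
      have hFlt : ∀ v : XT θ γ, F v < δ := by
        intro v
        have h1 : Ordinal.enumOrd S (F v) < Ordinal.enumOrd S δ := by
          rw [hF v]; exact lt_of_lt_of_le (hkeyub v) hup
        exact (Ordinal.enumOrd_strictMono hS).lt_iff_lt.1 h1
      let g : XT θ γ → ↥(Set.Iio δ) := fun v => ⟨F v, hFlt v⟩
      have hginj : Function.Injective g := fun u v h => hFinj (congrArg Subtype.val h)
      have h4 := Cardinal.mk_le_of_injective hginj
      rw [mk_XT hκ hks hγ, Ordinal.mk_Iio_ordinal, Cardinal.lift_le] at h4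
      exact absurd h4 (not_le.2 (Cardinal.lt_ord.1 hδ))

end SharpAux

namespace SharpAux

open Ordinal Cardinal Set

universe u

variable {Hes : Ordinal → Ordinal → Ordinal}

theorem oplus_lt (hp : HesProp Hes) {κ : Cardinal.{u}} (hunc : ℵ₀ < κ)
    (hreg : κ.IsRegular) {γ : Ordinal.{u}} (hγ : γ < κ.ord) (s t : Ordinal → Ordinal)
    (hs : ∀ α < γ + 1, s α < κ.ord) (ht : ∀ α < γ + 1, t α < κ.ord) :
    ∀ α < γ + 1, oplusPt Hes s t α < κ.ord := by
  intro α hα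
  have hκ : ℵ₀ ≤ κ := hunc.le
  have hlim := Cardinal.isSuccLimit_ord hκ
  have hadd : ∀ a b : Ordinal, a < κ.ord → b < κ.ord → a + b < κ.ord := by
    intro a b ha hb
    rw [Cardinal.lt_ord, Ordinal.card_add]
    exact Cardinal.add_lt_of_lt hκ (Cardinal.lt_ord.1 ha) (Cardinal.lt_ord.1 hb)
  rw [oplusPt]
  by_cases h0 : α = 0
  · rw [if_pos h0]
    rw [add_one_eq_succ]
    exact hlim.succ_lt (hes_lt_ord hp hκ (hs 0 (zero_lt_succ γ)) (ht 0 (zero_lt_succ γ)))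
  · rw [if_neg h0]
    have hα1 : α + 1 < κ.ord := by
      rw [add_one_eq_succ]
      exact hlim.succ_lt (hα.trans (by rw [add_one_eq_succ]; exact hlim.succ_lt hγ))
    have hsup : sSup (s '' Set.Iic α) < κ.ord := by
      have h1 : sSup (s '' Set.Iic α) ≤ Ordinal.bsup (α + 1) (fun β _ => s β) := by
        refine csSup_le ⟨s α, Set.mem_image_of_mem s Set.self_mem_Iic⟩ ?_
        rintro x ⟨β, hβ, rfl⟩
        exact Ordinal.le_bsup _ β (by rw [add_one_eq_succ]; exact Order.lt_succ_iff.2 hβ)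
      refine lt_of_le_of_lt h1 ?_
      apply Cardinal.bsup_lt_ord_of_isRegular hreg (Cardinal.lt_ord.1 hα1)
      intro β hβ
      have hβα : β ≤ α := Order.lt_succ_iff.1 (by rwa [add_one_eq_succ] at hβ)
      exact hs β (lt_of_le_of_lt hβα hα)
    have hω : Ordinal.omega0 < κ.ord :=
      Cardinal.lt_ord.2 (by rw [Ordinal.card_omega0]; exact hunc)
    have hin : Hes (s α) (t α) + 1 < κ.ord := by
      rw [add_one_eq_succ]
      exact hlim.succ_lt (hes_lt_ord hp hκ (hs α hα) (ht α hα))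
    rw [add_one_eq_succ]
    exact hlim.succ_lt (hes_lt_ord hp hκ (hadd _ _ hsup hω) hin)

end SharpAux


/-- For every uncountable cardinal `κ` with `κ^{<κ} = κ` there is a map `#` on the
sequences of ordinals `< κ` of successor length `< κ` (a sequence of length `γ + 1`
being coded as the pair of `γ` and a total function on the ordinals) such that:
it only depends on the values below the length; (a) `#(s) ≤ #(s ⊕ t)` for `s, t` of
the same successor length; and (b) for each `γ < κ`, `#` restricted to `^{γ+1}κ` is a
bijection onto `κ`. -/
theorem stmt2 (κ : Cardinal) (hunc : Cardinal.aleph0 < κ) (hks : κ ^< κ = κ)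
    (Hes : Ordinal → Ordinal → Ordinal) (hHes : HesProp Hes) :
    ∃ sharp : Ordinal → (Ordinal → Ordinal) → Ordinal,
      (∀ γ : Ordinal, ∀ s s' : Ordinal → Ordinal,
        (∀ α < γ + 1, s α = s' α) → sharp γ s = sharp γ s') ∧
      (∀ γ < κ.ord, ∀ s t : Ordinal → Ordinal,
        (∀ α < γ + 1, s α < κ.ord) → (∀ α < γ + 1, t α < κ.ord) →
        sharp γ s ≤ sharp γ (oplusPt Hes s t)) ∧
      (∀ γ < κ.ord,
        (∀ s : Ordinal → Ordinal, (∀ α < γ + 1, s α < κ.ord) → sharp γ s < κ.ord) ∧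
        (∀ s s' : Ordinal → Ordinal, (∀ α < γ + 1, s α < κ.ord) →
          (∀ α < γ + 1, s' α < κ.ord) → sharp γ s = sharp γ s' →
          ∀ α < γ + 1, s α = s' α) ∧
        (∀ δ < κ.ord, ∃ s : Ordinal → Ordinal,
          (∀ α < γ + 1, s α < κ.ord) ∧ sharp γ s = δ)) := by
  
  classical
  have hκ : Cardinal.aleph0 ≤ κ := hunc.le
  have hθ : (0 : Ordinal) < κ.ord := SharpAux.ord_pos' hκ
  have hreg : κ.IsRegular := by
    refine ⟨hκ, ?_⟩
    by_contra hcof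
    push_neg at hcof
    have h1 : κ < κ ^ κ.ord.cof := Cardinal.lt_power_cof hκ
    have h2 : κ ^ κ.ord.cof ≤ κ ^< κ := Cardinal.le_powerlt κ hcof
    rw [hks] at h2
    exact absurd (h1.trans_le h2) (lt_irrefl κ)
  have hex : ∀ γ : Ordinal, γ < κ.ord → ∃ F : SharpAux.XT κ.ord γ → Ordinal,
      (∀ u v : SharpAux.XT κ.ord γ, SharpAux.pmap hHes hθ γ v = u → u.1 0 < v.1 0 →
        F u < F v) ∧
      (∀ v, F v < κ.ord) ∧ Function.Injective F ∧ (∀ δ < κ.ord, ∃ v, F v = δ) :=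
    fun γ hγ => SharpAux.exists_F hHes hunc hks hreg hθ hγ
  choose F hF1 hF2 hF3 hF4 using hex
  refine ⟨fun γ s => if h : γ < κ.ord then F γ h (SharpAux.trunc hθ γ s) else 0, ?_, ?_, ?_⟩
  · -- depends only on values below γ + 1
    intro γ s s' hss
    have htr : SharpAux.trunc hθ γ s = SharpAux.trunc hθ γ s' := by
      apply Subtype.ext
      funext α
      show SharpAux.truncF κ.ord γ s α = SharpAux.truncF κ.ord γ s' α
      unfold SharpAux.truncF
      by_cases hα : α < γ + 1
      · rw [hss α hα]
      · rw [if_neg (fun h2 => hα h2.1), if_neg (fun h2 => hα h2.1)]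
    by_cases h : γ < κ.ord
    · simp only [dif_pos h, htr]
    · simp only [dif_neg h]
  · -- monotonicity under ⊕
    intro γ hγ s t hs ht
    simp only [dif_pos hγ]
    have hb := SharpAux.oplus_lt hHes hunc hreg hγ s t hs ht
    have hpv := SharpAux.pmap_trunc hHes hθ γ s t hs hb
    apply le_of_lt
    apply hF1 γ hγ _ _ hpv
    rw [SharpAux.trunc_apply_of_lt hθ (SharpAux.zero_lt_succ γ) (hs 0 (SharpAux.zero_lt_succ γ)),
      SharpAux.trunc_apply_of_lt hθ (SharpAux.zero_lt_succ γ) (hb 0 (SharpAux.zero_lt_succ γ))]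
    show s 0 < oplusPt Hes s t 0
    rw [oplusPt, if_pos rfl]
    calc s 0 ≤ Hes (s 0) (t 0) :=
        le_trans (le_max_left _ _) (SharpAux.hes_ge hHes _ _)
    _ < Hes (s 0) (t 0) + 1 := by rw [Ordinal.add_one_eq_succ]; exact Order.lt_succ _
  · -- bijection clauses
    intro γ hγ
    refine ⟨?_, ?_, ?_⟩
    · intro s hs
      simp only [dif_pos hγ]
      exact hF2 γ hγ _
    · intro s s' hs hs' heq α hα
      simp only [dif_pos hγ] at heq
      have htr := hF3 γ hγ heq
      have h2 := congrArg (fun v : SharpAux.XT κ.ord γ => v.1 α) htr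
      rwa [SharpAux.trunc_apply_of_lt hθ hα (hs α hα),
        SharpAux.trunc_apply_of_lt hθ hα (hs' α hα)] at h2
    · intro δ hδ
      obtain ⟨v, hv⟩ := hF4 γ hγ δ hδ
      refine ⟨v.1, fun α hα => (v.2 α).1 hα, ?_⟩
      simp only [dif_pos hγ]
      rw [SharpAux.trunc_eq_self hθ γ v, hv]
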